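/- Let ξ₁, …, ξ_n be real-valued square-integrable random variables on a probability space (Ω, F, P) such that E[ξ_i ξ_j] ≥ 0 for all 1 ≤ i, j ≤ n. Then Σ_{i=1}^n Σ_{j=1}^n (E[ξ_i ξ_j])² ≤ (max_{1≤i≤n} E[ξ_i²]) · E[(Σ_{i=1}^n ξ_i)²]. -/

import Mathlib

open MeasureTheory

/-- for square-integrable random variables `ξ₁, …, ξ_n` with pairwise
nonnegative correlations `E[ξ_i ξ_j] ≥ 0`, the sum of squared covariances is bounded by
the maximal second moment times the second moment of the sum. -/
theorem stmt_9
    {Ω : Type*} [MeasurableSpace Ω] (P : Measure Ω) [IsProbabilityMeasure P]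
    (n : ℕ) (hn : 0 < n) (ξ : Fin n → Ω → ℝ)
    (hL2 : ∀ i, MemLp (ξ i) 2 P)
    (hpos : ∀ i j, 0 ≤ ∫ ω, ξ i ω * ξ j ω ∂P) :
    ∑ i, ∑ j, (∫ ω, ξ i ω * ξ j ω ∂P) ^ 2
      ≤ (Finset.univ.sup'
            (by have : Nonempty (Fin n) := Fin.pos_iff_nonempty.mp hn
                exact Finset.univ_nonempty)
            fun i => ∫ ω, (ξ i ω) ^ 2 ∂P)
        * ∫ ω, (∑ i, ξ i ω) ^ 2 ∂P := by
  have : Nonempty (Fin n) := Fin.pos_iff_nonempty.mp hn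
  set c : Fin n → Fin n → ℝ := fun i j => ∫ ω, ξ i ω * ξ j ω ∂P with hc
  set M : ℝ := Finset.univ.sup' (by exact Finset.univ_nonempty)
      (fun i => ∫ ω, (ξ i ω) ^ 2 ∂P) with hM
  -- integrability of products
  have hint : ∀ i j, Integrable (fun ω => ξ i ω * ξ j ω) P := by
    intro i j
    have := ((hL2 j).smul (hL2 i) (p := 2) (q := 2) (r := 1) (hpqr := ⟨by norm_num [one_div, ENNReal.inv_two_add_inv_two]⟩)).integrable le_rfl
    exact this
  -- L2 elements
  set f : Fin n → Lp ℝ 2 P := fun i => (hL2 i).toLp (ξ i) with hf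
  have hinner : ∀ i j, inner ℝ (f i) (f j) = c i j := by
    intro i j
    rw [L2.inner_def]
    refine integral_congr_ae ?_
    filter_upwards [(hL2 i).coeFn_toLp, (hL2 j).coeFn_toLp] with ω h1 h2
    simp [hf, h1, h2, real_inner_eq_re_inner, mul_comm]
  have hcsym : ∀ i, c i i = ∫ ω, (ξ i ω) ^ 2 ∂P := by
    intro i; simp only [hc]; congr 1; funext ω; ring
  have hMnonneg : 0 ≤ M := by
    rw [hM]
    exact le_trans (integral_nonneg fun ω => sq_nonneg _)
      (Finset.le_sup' (fun i => ∫ ω, (ξ i ω) ^ 2 ∂P)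
        (Finset.mem_univ (Classical.arbitrary (Fin n))))
  have hciiM : ∀ i, c i i ≤ M := fun i => by
    rw [hcsym, hM]; exact Finset.le_sup' (fun i => ∫ ω, (ξ i ω) ^ 2 ∂P) (Finset.mem_univ i)
  -- c i j ≤ M
  have hcM : ∀ i j, c i j ≤ M := by
    intro i j
    have hcs := real_inner_mul_inner_self_le (f i) (f j)
    rw [hinner, hinner, hinner] at hcs
    have h1 := hciiM i
    have h2 := hciiM j
    have hii : 0 ≤ c i i := hpos i i
    have hjj : 0 ≤ c j j := hpos j j
    nlinarith [hpos i j, sq_nonneg (c i j - M)]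
  -- expansion of the integral of the square of the sum
  have hexp : ∫ ω, (∑ i, ξ i ω) ^ 2 ∂P = ∑ i, ∑ j, c i j := by
    have : ∀ ω, (∑ i, ξ i ω) ^ 2 = ∑ i, ∑ j, ξ i ω * ξ j ω := by
      intro ω; rw [sq, Finset.sum_mul_sum]
    simp_rw [this]
    rw [integral_finset_sum _ fun i _ => integrable_finset_sum _ fun j _ => hint i j]
    exact Finset.sum_congr rfl fun i _ =>
      integral_finset_sum _ fun j _ => hint i j
  calc ∑ i, ∑ j, c i j ^ 2
      ≤ ∑ i, ∑ j, M * c i j := by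
        refine Finset.sum_le_sum fun i _ => Finset.sum_le_sum fun j _ => ?_
        rw [sq]
        exact mul_le_mul_of_nonneg_right (hcM i j) (hpos i j)
    _ = M * ∫ ω, (∑ i, ξ i ω) ^ 2 ∂P := by
        rw [hexp, Finset.mul_sum]
        exact Finset.sum_congr rfl fun i _ => (Finset.mul_sum _ _ _).symm
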